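/- Assume (A0), (A1) and (A2). Then for all strategies φ, φ̄ ∈ Φ: the matrix 𝔸(φ,φ̄)^{-1}𝔹(φ) is substochastic; the matrix (𝔸 − 𝔹)(φ,φ̄) := 𝔸(φ,φ̄) − 𝔹(φ) is a WDD L0-matrix; and ĉon[𝔸(φ,φ̄)^{-1}𝔹(φ)] ≤ con[(𝔸 − 𝔹)(φ,φ̄)]. -/

import Mathlib

open Matrix Finset Filter Topology

noncomputable section

section MatrixDefs

variable {n : Type*} [Fintype n] [DecidableEq n]

/-- A Z-matrix: nonpositive off-diagonal entries. -/
def IsZMatrix (A : Matrix n n ℝ) : Prop := ∀ i j, i ≠ j → A i j ≤ 0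

/-- An L0-matrix: a Z-matrix with nonnegative diagonal entries. -/
def IsL0Matrix (A : Matrix n n ℝ) : Prop := IsZMatrix A ∧ ∀ i, 0 ≤ A i i

/-- Row `i` of `A` is strictly diagonally dominant. -/
def SDDRow (A : Matrix n n ℝ) (i : n) : Prop :=
  ∑ j ∈ Finset.univ.erase i, |A i j| < |A i i|

/-- Row `i` of `A` is weakly diagonally dominant. -/
def WDDRow (A : Matrix n n ℝ) (i : n) : Prop :=
  ∑ j ∈ Finset.univ.erase i, |A i j| ≤ |A i i|

def IsWDD (A : Matrix n n ℝ) : Prop := ∀ i, WDDRow A i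

def IsSDD (A : Matrix n n ℝ) : Prop := ∀ i, SDDRow A i

/-- A (nonempty) walk in the directed graph of `A` (edge `a → b` iff `A a b ≠ 0`). -/
def MWalk (A : Matrix n n ℝ) (i j : n) : Prop :=
  Relation.TransGen (fun a b => A a b ≠ 0) i j

/-- Weakly chained diagonally dominant matrix. -/
def IsWCDD (A : Matrix n n ℝ) : Prop :=
  IsWDD A ∧ ∀ i, ¬ SDDRow A i → ∃ j, SDDRow A j ∧ MWalk A i j

/-- Substochastic matrix: nonnegative entries and row sums at most one. -/
def IsSubstochastic (A : Matrix n n ℝ) : Prop :=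
  (∀ i j, 0 ≤ A i j) ∧ ∀ i, ∑ j, A i j ≤ 1

end MatrixDefs

/-- The data of a (discretized) symmetric nonzero-sum impulse game on the symmetric grid
`x (-N) < … < x 0 = 0 < … < x N`, indexed here by `Fin (2*N+1)` (so that index `N`
corresponds to the grid point `0`, and `Fin.rev` is the reflection `x ↦ -x`). -/
structure GameSetup (N : ℕ) where
  x : Fin (2*N+1) → ℝ
  hx_mono : StrictMono x
  hx_sym : ∀ i, x i.rev = -(x i)
  Z : Fin (2*N+1) → Finset ℝ
  hZ_ne : ∀ i, (Z i).Nonempty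
  hZ_nonneg : ∀ i, ∀ d ∈ Z i, 0 ≤ d
  hZ_zero : ∀ i, 0 ≤ x i → Z i = {0}
  B : (Fin (2*N+1) → ℝ) → Matrix (Fin (2*N+1)) (Fin (2*N+1)) ℝ
  c : (Fin (2*N+1) → ℝ) → Fin (2*N+1) → ℝ
  g : (Fin (2*N+1) → ℝ) → Fin (2*N+1) → ℝ
  hB_rd : ∀ δ δ' i, δ i = δ' i → B δ i = B δ' i
  hc_rd : ∀ δ δ' i, δ i = δ' i → c δ i = c δ' i
  hg_rd : ∀ δ δ' i, δ i = δ' i → g δ i = g δ' i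
  hc_pos : ∀ δ, (∀ i, δ i ∈ Z i) → ∀ i, 0 < c δ i
  L : Matrix (Fin (2*N+1)) (Fin (2*N+1)) ℝ
  f : Fin (2*N+1) → ℝ

variable {N : ℕ}

/-- The symmetry (permutation) matrix `S v (x) = v (-x)`. -/
def Smat (N : ℕ) : Matrix (Fin (2*N+1)) (Fin (2*N+1)) ℝ :=
  Matrix.of fun i j => if j = i.rev then (1:ℝ) else 0

namespace GameSetup

variable (s : GameSetup N)

/-- Admissible impulse functions: `δ i ∈ Z i` for all grid points. -/
def Adm (δ : Fin (2*N+1) → ℝ) : Prop := ∀ i, δ i ∈ s.Z i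

/-- The discrete loss operator `M v = max_{δ ∈ Z} (B δ v - c δ)` (entrywise, using
row-decoupledness to maximize row by row). -/
def M (v : Fin (2*N+1) → ℝ) (i : Fin (2*N+1)) : ℝ :=
  (s.Z i).sup' (s.hZ_ne i) fun d => (s.B fun _ => d).mulVec v i - s.c (fun _ => d) i

/-- `δstar v i`: the largest impulse in `Z i` attaining the maximum defining `M v i`. -/
def δstar (v : Fin (2*N+1) → ℝ) (i : Fin (2*N+1)) : ℝ :=
  ((s.Z i).filter fun d =>
    (s.B fun _ => d).mulVec v i - s.c (fun _ => d) i = s.M v i).max.unbotD 0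

/-- The discrete gain operator `H v = S B(δ*(v)) S v + g (S δ*(v))`. -/
def H (v : Fin (2*N+1) → ℝ) : Fin (2*N+1) → ℝ :=
  (Smat N * s.B (s.δstar v) * Smat N).mulVec v + s.g (s.δstar v ∘ Fin.rev)

/-- A (discrete) strategy: an intervention region `I ⊆ G_{<0}` and an admissible
impulse function. -/
structure Strategy where
  I : Finset (Fin (2*N+1))
  δ : Fin (2*N+1) → ℝ
  hI : ∀ i ∈ I, s.x i < 0
  hδ : ∀ i, δ i ∈ s.Z i

/-- The diagonal indicator matrix of the intervention region of a strategy. -/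
def Psi (φ : s.Strategy) : Matrix (Fin (2*N+1)) (Fin (2*N+1)) ℝ :=
  Matrix.diagonal fun i => if i ∈ φ.I then (1:ℝ) else 0

/-- `𝔸(φ,φ̄) = Id − (Id − Ψ̄ − SΨS)(Id + L) − Ψ̄ B(δ̄)`. -/
def Amat (φ φ' : s.Strategy) : Matrix (Fin (2*N+1)) (Fin (2*N+1)) ℝ :=
  1 - (1 - s.Psi φ' - Smat N * s.Psi φ * Smat N) * (1 + s.L) - s.Psi φ' * s.B φ'.δ

/-- `𝔹(φ) = S Ψ B(δ) S`. -/
def Bmat (φ : s.Strategy) : Matrix (Fin (2*N+1)) (Fin (2*N+1)) ℝ :=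
  Smat N * s.Psi φ * s.B φ.δ * Smat N

/-- `ℂ(φ,φ̄) = (Id − Ψ̄ − SΨS) f − Ψ̄ c(δ̄) + SΨS g(Sδ)`. -/
def Cvec (φ φ' : s.Strategy) : Fin (2*N+1) → ℝ :=
  (1 - s.Psi φ' - Smat N * s.Psi φ * Smat N).mulVec s.f - (s.Psi φ').mulVec (s.c φ'.δ)
    + (Smat N * s.Psi φ * Smat N).mulVec (s.g (φ.δ ∘ Fin.rev))

/-- Assumption (A0). -/
def A0 : Prop := ∀ φ : s.Strategy, ∀ i ∈ φ.I, ∃ j, j ∉ φ.I ∧ MWalk (s.B φ.δ) i j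

/-- Assumption (A1). -/
def A1 : Prop :=
  (IsSDD (-s.L) ∧ IsL0Matrix (-s.L)) ∧
    ∀ δ, s.Adm δ → IsWDD (1 - s.B δ) ∧ IsL0Matrix (1 - s.B δ)

/-- Assumption (A2). -/
def A2 : Prop := ∀ δ, s.Adm δ → ∀ i, 0 ≤ s.B δ i i

/-- Assumption (A0'). -/
def A0' : Prop :=
  ∀ φ φ' : s.Strategy, ∀ i, (i ∈ φ'.I ∨ i.rev ∈ φ.I) →
    ∃ j, ¬(j ∈ φ'.I ∨ j.rev ∈ φ.I) ∧
      MWalk (s.Psi φ' * s.B φ'.δ + Smat N * s.Psi φ * s.B φ.δ * Smat N) i j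

/-- Identity-row condition: zero impulse gives the corresponding identity row. -/
def IdRow : Prop :=
  ∀ δ, s.Adm δ → ∀ i, δ i = 0 →
    s.B δ i = (1 : Matrix (Fin (2*N+1)) (Fin (2*N+1)) ℝ) i

/-- The discrete QVI system: `Mv − v ≤ 0` on `G`, `Hv − v = 0` on `−I*(v)`, and
`max{Lv + f, Mv − v} = 0` on `−C*(v)`. -/
def SolvesQVI (v : Fin (2*N+1) → ℝ) : Prop :=
  (∀ i, s.M v i - v i ≤ 0) ∧
  (∀ i, s.M v i.rev - v i.rev = 0 → s.H v i - v i = 0) ∧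
  (∀ i, s.M v i.rev - v i.rev < 0 →
    max (s.L.mulVec v i + s.f i) (s.M v i - v i) = 0)

/-- The intervention region induced by a payoff `v`. -/
def indI (v : Fin (2*N+1) → ℝ) : Finset (Fin (2*N+1)) :=
  Finset.univ.filter fun i => s.x i < 0 ∧ s.L.mulVec v i + s.f i ≤ s.M v i - v i

/-- `φ` is the strategy induced by the payoff `v`. -/
def IsInduced (v : Fin (2*N+1) → ℝ) (φ : s.Strategy) : Prop :=
  φ.I = s.indI v ∧ φ.δ = s.δstar v

/-- An algorithm sequence: payoffs `v^k` with induced strategies `φ^k` satisfying the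
fixed-point recurrence `𝔸(φ^k,φ^{k+1}) v^{k+1} = 𝔹(φ^k) v^k + ℂ(φ^k,φ^{k+1})`. -/
def IsAlgSeq (v : ℕ → Fin (2*N+1) → ℝ) (φ : ℕ → s.Strategy) : Prop :=
  (∀ k, s.IsInduced (v k) (φ k)) ∧
  ∀ k, (s.Amat (φ k) (φ (k+1))).mulVec (v (k+1)) =
    (s.Bmat (φ k)).mulVec (v k) + s.Cvec (φ k) (φ (k+1))

/-- The discrete unique impulse property. -/
def UIP (v : Fin (2*N+1) → ℝ) : Prop :=
  ∀ i, s.M v i = v i →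
    ∃! d, d ∈ s.Z i ∧ (s.B fun _ => d).mulVec v i - s.c (fun _ => d) i = s.M v i

end GameSetup

/-- A walk of length `k` in the directed graph of `A` from `i` to `j`. -/
def walkOfLen {n : Type*} [Fintype n] [DecidableEq n]
    (A : Matrix n n ℝ) (k : ℕ) (i j : n) : Prop :=
  ∃ p : Fin (k+1) → n, p 0 = i ∧ p (Fin.last k) = j ∧
    ∀ m : Fin k, A (p m.castSucc) (p m.succ) ≠ 0

/-- The index of connectivity of a matrix: the sup over non-SDD rows `i` of the least
length of a walk from `i` to an SDD row (`0` if every row is SDD, `⊤` if some non-SDD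
row reaches no SDD row). -/
def conIdx {n : Type*} [Fintype n] [DecidableEq n] (A : Matrix n n ℝ) : ℕ∞ :=
  ⨆ i ∈ {i : n | ¬ SDDRow A i},
    sInf ((fun m : ℕ => (m : ℕ∞)) '' {m : ℕ | ∃ j, SDDRow A j ∧ walkOfLen A m i j})

/-- The index of contraction of a (substochastic) matrix: as `conIdx`, with SDD rows
replaced by rows of sum strictly less than one. -/
def conHat {n : Type*} [Fintype n] [DecidableEq n] (A : Matrix n n ℝ) : ℕ∞ :=
  ⨆ i ∈ {i : n | ¬ ((∑ j, A i j) < 1)},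
    sInf ((fun m : ℕ => (m : ℕ∞)) ''
      {m : ℕ | ∃ j, (∑ l, A j l) < 1 ∧ walkOfLen A m i j})

section Generic
variable {n : Type*} [Fintype n] [DecidableEq n]

/-- walk of length 0 means equal endpoints -/
lemma walkOfLen_zero {A : Matrix n n ℝ} {i j : n} (h : walkOfLen A 0 i j) : i = j := by
  obtain ⟨p, h0, hl, -⟩ := h
  rw [← h0, ← hl]; rfl

lemma walkOfLen_single {A : Matrix n n ℝ} {i j : n} (h : A i j ≠ 0) : walkOfLen A 1 i j := by
  refine ⟨![i, j], rfl, rfl, ?_⟩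
  intro m
  fin_cases m
  simpa using h

lemma walkOfLen_cons {A : Matrix n n ℝ} {m : ℕ} {i b j : n} (h : A i b ≠ 0)
    (hw : walkOfLen A m b j) : walkOfLen A (m+1) i j := by
  obtain ⟨p, h0, hl, he⟩ := hw
  refine ⟨fun t => Fin.cases i p t, by simp, ?_, ?_⟩
  · rw [← Fin.succ_last]
    exact hl
  · intro t
    induction t using Fin.cases with
    | zero =>
      have e1 : ((0 : Fin (m+1)).castSucc : Fin (m+2)) = 0 := rfl
      have e2 : ((0 : Fin (m+1)).succ : Fin (m+2)) = Fin.succ 0 := rfl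
      rw [e1, e2]
      show A (Fin.cases i p 0) (Fin.cases i p (Fin.succ 0)) ≠ 0
      rw [Fin.cases_zero, Fin.cases_succ, h0]
      exact h
    | succ r =>
      have h1 : ((r.succ).castSucc : Fin (m+2)) = (r.castSucc).succ := by
        rfl
      rw [h1]
      simpa using he r

lemma walkOfLen_uncons {A : Matrix n n ℝ} {m : ℕ} {i j : n} (h : walkOfLen A (m+1) i j) :
    ∃ b, A i b ≠ 0 ∧ walkOfLen A m b j := by
  obtain ⟨p, h0, hl, he⟩ := h
  refine ⟨p (Fin.succ 0), ?_, fun t => p (Fin.succ t), rfl, ?_, ?_⟩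
  · have := he 0
    rw [show ((0 : Fin (m+1)).castSucc : Fin (m+2)) = 0 from rfl, h0] at this
    exact this
  · show p ((Fin.last m).succ) = j
    rw [Fin.succ_last, hl]
  · intro r
    have h1 : ((r.succ).castSucc : Fin (m+2)) = (r.castSucc).succ := by
      rfl
    have := he r.succ
    rw [h1] at this
    exact this
end Generic

section MP
variable {n : Type*} [Fintype n] [DecidableEq n]

lemma rowsum_eq {A : Matrix n n ℝ} (hL0 : IsL0Matrix A) (i : n) :
    ∑ j, A i j = A i i - ∑ j ∈ Finset.univ.erase i, |A i j| := by
  have h1 : ∑ j ∈ Finset.univ.erase i, A i j = ∑ j, A i j - A i i :=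
    Finset.sum_erase_eq_sub (Finset.mem_univ i)
  have h2 : ∑ j ∈ Finset.univ.erase i, |A i j| = -∑ j ∈ Finset.univ.erase i, A i j := by
    rw [← Finset.sum_neg_distrib]
    refine Finset.sum_congr rfl fun j hj => ?_
    exact abs_of_nonpos (hL0.1 i j (Ne.symm (Finset.ne_of_mem_erase hj)))
  rw [h2, h1]; ring

lemma sdd_iff_rowsum_pos {A : Matrix n n ℝ} (hL0 : IsL0Matrix A) (i : n) :
    SDDRow A i ↔ 0 < ∑ j, A i j := by
  have := rowsum_eq hL0 i
  unfold SDDRow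
  rw [abs_of_nonneg (hL0.2 i)]
  constructor <;> intro h <;> linarith

lemma rowsum_nonneg {A : Matrix n n ℝ} (hL0 : IsL0Matrix A) (hW : IsWDD A) (i : n) :
    0 ≤ ∑ j, A i j := by
  have := rowsum_eq hL0 i
  have h2 := hW i
  unfold WDDRow at h2
  rw [abs_of_nonneg (hL0.2 i)] at h2
  linarith

/-- discrete maximum principle for WCDD L0 matrices -/
lemma wcdd_maxp {A : Matrix n n ℝ} (hL0 : IsL0Matrix A) (hWC : IsWCDD A)
    (u : n → ℝ) (hu : ∀ i, 0 ≤ A.mulVec u i) : ∀ i, 0 ≤ u i := by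
  by_contra hcon
  push_neg at hcon
  obtain ⟨i1, hi1⟩ := hcon
  obtain ⟨i0, -, hmin⟩ := Finset.exists_min_image Finset.univ u ⟨i1, Finset.mem_univ i1⟩
  set m := u i0 with hm
  have hmneg : m < 0 := lt_of_le_of_lt (hmin i1 (Finset.mem_univ i1)) hi1
  have claim : ∀ a, u a = m → ¬ SDDRow A a ∧ ∀ b, A a b ≠ 0 → u b = m := by
    intro a hua
    have hmv : A.mulVec u a = ∑ j, A a j * u j := rfl
    have hterm : ∀ j ∈ Finset.univ, A a j * u j ≤ A a j * m := by
      intro j _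
      rcases eq_or_ne j a with rfl | hja
      · rw [hua]
      · exact mul_le_mul_of_nonpos_left (hmin j (Finset.mem_univ j))
          (hL0.1 a j (Ne.symm hja))
    have hsum : ∑ j, A a j * u j ≤ (∑ j, A a j) * m := by
      rw [Finset.sum_mul]
      exact Finset.sum_le_sum hterm
    have hS : 0 ≤ ∑ j, A a j := rowsum_nonneg hL0 hWC.1 a
    have hSm : (∑ j, A a j) * m ≤ 0 := mul_nonpos_of_nonneg_of_nonpos hS (le_of_lt hmneg)
    have h0 : (0:ℝ) ≤ ∑ j, A a j * u j := by rw [← hmv]; exact hu a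
    have heq1 : (∑ j, A a j) * m = 0 := le_antisymm hSm (le_trans h0 hsum)
    have hSzero : ∑ j, A a j = 0 := by
      rcases mul_eq_zero.mp heq1 with h | h
      · exact h
      · exact absurd h (ne_of_lt hmneg)
    constructor
    · rw [sdd_iff_rowsum_pos hL0 a, hSzero]
      exact lt_irrefl 0
    · -- equality in the sum
      have hm0 : ∑ j, A a j * m = 0 := by rw [← Finset.sum_mul, hSzero, zero_mul]
      have hm0' : (∑ j, A a j) * m = 0 := by rw [hSzero, zero_mul]
      have heq2 : ∑ j, A a j * u j = ∑ j, A a j * m := by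
        rw [hm0]; linarith
      have hzero : ∀ j ∈ Finset.univ, A a j * m - A a j * u j = 0 := by
        have hnn : ∀ j ∈ Finset.univ, 0 ≤ A a j * m - A a j * u j := fun j hj =>
          sub_nonneg.mpr (hterm j hj)
        have hsz : ∑ j, (A a j * m - A a j * u j) = 0 := by
          rw [Finset.sum_sub_distrib, heq2, sub_self]
        exact fun j hj => (Finset.sum_eq_zero_iff_of_nonneg hnn).mp hsz j hj
      intro b hb
      have := hzero b (Finset.mem_univ b)
      have h3 : A a b * (m - u b) = 0 := by ring_nf; ring_nf at this; linarith
      rcases mul_eq_zero.mp h3 with h | h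
      · exact absurd h hb
      · linarith [sub_eq_zero.mp h]
  have prop : ∀ b, MWalk A i0 b → u b = m := by
    intro b hw
    induction hw with
    | single h => exact (claim i0 rfl).2 _ h
    | tail hw h ih => exact (claim _ ih).2 _ h
  obtain ⟨j, hjS, hwalk⟩ := hWC.2 i0 (claim i0 rfl).1
  exact (claim j (prop j hwalk)).1 hjS

lemma wcdd_det_ne_zero {A : Matrix n n ℝ} (hL0 : IsL0Matrix A) (hWC : IsWCDD A) :
    A.det ≠ 0 := by
  intro hdet
  obtain ⟨v, hv, hv0⟩ := (Matrix.exists_mulVec_eq_zero_iff).mpr hdet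
  have h1 : ∀ i, 0 ≤ v i := wcdd_maxp hL0 hWC v (fun i => by rw [hv0]; exact le_refl 0)
  have h2 : ∀ i, 0 ≤ (-v) i := wcdd_maxp hL0 hWC (-v)
    (fun i => by rw [Matrix.mulVec_neg, hv0]; simp)
  exact hv (funext fun i => le_antisymm (by simpa using h2 i) (h1 i))

lemma wcdd_mul_inv {A : Matrix n n ℝ} (hL0 : IsL0Matrix A) (hWC : IsWCDD A) :
    A * A⁻¹ = 1 :=
  Matrix.mul_nonsing_inv A (isUnit_iff_ne_zero.mpr (wcdd_det_ne_zero hL0 hWC))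

lemma wcdd_inv_mul {A : Matrix n n ℝ} (hL0 : IsL0Matrix A) (hWC : IsWCDD A) :
    A⁻¹ * A = 1 :=
  Matrix.nonsing_inv_mul A (isUnit_iff_ne_zero.mpr (wcdd_det_ne_zero hL0 hWC))

lemma wcdd_inv_nonneg {A : Matrix n n ℝ} (hL0 : IsL0Matrix A) (hWC : IsWCDD A) :
    ∀ i j, 0 ≤ A⁻¹ i j := by
  intro i j
  have hmv : ∀ k, A.mulVec (fun l => A⁻¹ l j) k = (A * A⁻¹) k j := by
    intro k
    simp [Matrix.mulVec, Matrix.mul_apply, dotProduct]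
  have := wcdd_maxp hL0 hWC (fun l => A⁻¹ l j) (fun k => by
    rw [hmv k, wcdd_mul_inv hL0 hWC]
    rcases eq_or_ne k j with rfl | hkj
    · simp
    · simp [Matrix.one_apply_ne hkj]) i
  simpa using this

lemma wcdd_inv_diag_pos {A : Matrix n n ℝ} (hL0 : IsL0Matrix A) (hWC : IsWCDD A) :
    ∀ j, 0 < A⁻¹ j j := by
  intro j
  rcases lt_or_eq_of_le (wcdd_inv_nonneg hL0 hWC j j) with h | h
  · exact h
  · exfalso
    have h1 : (A * A⁻¹) j j = 1 := by rw [wcdd_mul_inv hL0 hWC]; simp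
    have h2 : (A * A⁻¹) j j ≤ 0 := by
      rw [Matrix.mul_apply]
      refine Finset.sum_nonpos fun k _ => ?_
      rcases eq_or_ne k j with rfl | hkj
      · rw [← h, mul_zero]
      · exact mul_nonpos_of_nonpos_of_nonneg (hL0.1 j k (Ne.symm hkj))
          (wcdd_inv_nonneg hL0 hWC k j)
    linarith

lemma wcdd_inv_backprop {A : Matrix n n ℝ} (hL0 : IsL0Matrix A) (hWC : IsWCDD A)
    {a b k : n} (hab : A a b ≠ 0) (hne : a ≠ b) (hk : 0 < A⁻¹ b k) : 0 < A⁻¹ a k := by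
  rcases eq_or_ne k a with rfl | hka
  · exact wcdd_inv_diag_pos hL0 hWC k
  rcases lt_or_eq_of_le (wcdd_inv_nonneg hL0 hWC a k) with h | h
  · exact h
  exfalso
  have h1 : (A * A⁻¹) a k = 0 := by
    rw [wcdd_mul_inv hL0 hWC, Matrix.one_apply_ne (Ne.symm hka)]
  rw [Matrix.mul_apply] at h1
  have hbmem : b ∈ Finset.univ.erase a := Finset.mem_erase.mpr ⟨Ne.symm hne, Finset.mem_univ b⟩
  have hsplit : ∑ c, A a c * A⁻¹ c k
      = A a a * A⁻¹ a k + ∑ c ∈ Finset.univ.erase a, A a c * A⁻¹ c k := by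
    exact (Finset.add_sum_erase _ _ (Finset.mem_univ a)).symm
  have hsplit2 : ∑ c ∈ Finset.univ.erase a, A a c * A⁻¹ c k
      = A a b * A⁻¹ b k + ∑ c ∈ (Finset.univ.erase a).erase b, A a c * A⁻¹ c k := by
    exact (Finset.add_sum_erase _ _ hbmem).symm
  have hrest : ∑ c ∈ (Finset.univ.erase a).erase b, A a c * A⁻¹ c k ≤ 0 := by
    refine Finset.sum_nonpos fun c hc => ?_
    have hca : c ≠ a := Finset.ne_of_mem_erase (Finset.mem_of_mem_erase hc)
    exact mul_nonpos_of_nonpos_of_nonneg (hL0.1 a c (Ne.symm hca))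
      (wcdd_inv_nonneg hL0 hWC c k)
  have hAab : A a b < 0 := lt_of_le_of_ne (hL0.1 a b hne) hab
  have hneg : A a b * A⁻¹ b k < 0 := mul_neg_of_neg_of_pos hAab hk
  rw [hsplit, hsplit2, ← h, mul_zero, zero_add] at h1
  linarith

theorem generic_main {A B : Matrix n n ℝ} (hAL0 : IsL0Matrix A) (hAWC : IsWCDD A)
    (hB : ∀ i j, 0 ≤ B i j) (hDW : IsWDD (A - B)) (hDL0 : IsL0Matrix (A - B)) :
    IsSubstochastic (A⁻¹ * B) ∧ conHat (A⁻¹ * B) ≤ conIdx (A - B) := by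
  have hinv := wcdd_inv_nonneg hAL0 hAWC
  have hdiag := wcdd_inv_diag_pos hAL0 hAWC
  set D : Matrix n n ℝ := A - B with hD
  set w : n → ℝ := fun i => ∑ l, D i l with hwdef
  set u : n → ℝ := fun i => ∑ k, A⁻¹ i k * w k with hudef
  have hwnn : ∀ i, 0 ≤ w i := fun i => rowsum_nonneg hDL0 hDW i
  have hueq : u = (A⁻¹).mulVec w := rfl
  have hAu : ∀ i, A.mulVec u i = w i := by
    have : A.mulVec u = w := by
      rw [hueq, Matrix.mulVec_mulVec, wcdd_mul_inv hAL0 hAWC, Matrix.one_mulVec]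
    exact fun i => congrFun this i
  have hunn : ∀ i, 0 ≤ u i :=
    wcdd_maxp hAL0 hAWC u (fun i => by rw [hAu i]; exact hwnn i)
  have hupos : ∀ j, 0 < w j → 0 < u j := by
    intro j hwj
    have h1 : A⁻¹ j j * w j ≤ ∑ k, A⁻¹ j k * w k :=
      Finset.single_le_sum (fun k _ => mul_nonneg (hinv j k) (hwnn k)) (Finset.mem_univ j)
    have h2 : 0 < A⁻¹ j j * w j := mul_pos (hdiag j) hwj
    calc (0:ℝ) < A⁻¹ j j * w j := h2
      _ ≤ u j := h1
  have hzero : ∀ i, u i = 0 → w i = 0 ∧ ∀ b, b ≠ i → A i b ≠ 0 → u b = 0 := by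
    intro i hui
    have h1 : w i = ∑ k, A i k * u k := (hAu i).symm
    have hsplit : ∑ k, A i k * u k
        = A i i * u i + ∑ k ∈ Finset.univ.erase i, A i k * u k :=
      (Finset.add_sum_erase _ _ (Finset.mem_univ i)).symm
    have hterms : ∀ k ∈ Finset.univ.erase i, A i k * u k ≤ 0 := fun k hk =>
      mul_nonpos_of_nonpos_of_nonneg
        (hAL0.1 i k (Ne.symm (Finset.ne_of_mem_erase hk))) (hunn k)
    have hle : ∑ k ∈ Finset.univ.erase i, A i k * u k ≤ 0 := Finset.sum_nonpos hterms
    have hwi0 : w i = 0 := by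
      have hw2 : w i ≤ 0 := by
        rw [h1, hsplit, hui, mul_zero, zero_add]
        exact hle
      exact le_antisymm hw2 (hwnn i)
    have hsum0 : ∑ k ∈ Finset.univ.erase i, A i k * u k = 0 := by
      have h2 := hwi0
      rw [h1, hsplit, hui, mul_zero, zero_add] at h2
      exact h2
    have heach := (Finset.sum_eq_zero_iff_of_nonpos hterms).mp hsum0
    refine ⟨hwi0, fun b hbi hAib => ?_⟩
    have := heach b (Finset.mem_erase.mpr ⟨hbi, Finset.mem_univ b⟩)
    rcases mul_eq_zero.mp this with h | h
    · exact absurd h hAib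
    · exact h
  have hCnn : ∀ i j, 0 ≤ (A⁻¹ * B) i j := by
    intro i j
    rw [Matrix.mul_apply]
    exact Finset.sum_nonneg fun k _ => mul_nonneg (hinv i k) (hB k j)
  have hBsum : ∀ k, ∑ j, B k j = (∑ j, A k j) - w k := by
    intro k
    have h1 : w k = ∑ j, (A k j - B k j) := by
      simp only [hwdef, hD, Matrix.sub_apply]
    rw [Finset.sum_sub_distrib] at h1
    linarith
  have hrow : ∀ i, ∑ j, (A⁻¹ * B) i j = 1 - u i := by
    intro i
    have h1 : ∑ j, (A⁻¹ * B) i j = ∑ k, A⁻¹ i k * ∑ j, B k j := by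
      simp only [Matrix.mul_apply, Finset.mul_sum]
      rw [Finset.sum_comm]
    have h3 : ∑ k, A⁻¹ i k * ∑ j, A k j = ∑ j, (A⁻¹ * A) i j := by
      simp only [Matrix.mul_apply, Finset.mul_sum]
      rw [Finset.sum_comm]
    have h4 : ∑ j, (A⁻¹ * A) i j = 1 := by
      rw [wcdd_inv_mul hAL0 hAWC]
      simp [Matrix.one_apply]
    calc ∑ j, (A⁻¹ * B) i j = ∑ k, A⁻¹ i k * ∑ j, B k j := h1
      _ = ∑ k, A⁻¹ i k * ((∑ j, A k j) - w k) := by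
          exact Finset.sum_congr rfl fun k _ => by rw [hBsum k]
      _ = (∑ k, A⁻¹ i k * ∑ j, A k j) - ∑ k, A⁻¹ i k * w k := by
          simp [mul_sub, Finset.sum_sub_distrib]
      _ = 1 - u i := by rw [h3, h4, hudef]
  have hsub : IsSubstochastic (A⁻¹ * B) := by
    refine ⟨hCnn, fun i => ?_⟩
    rw [hrow i]
    linarith [hunn i]
  refine ⟨hsub, ?_⟩
  -- edge lemmas for C := A⁻¹ * B
  have hCedge : ∀ a z, (A⁻¹ * B) a z ≠ 0 → ∃ k, 0 < A⁻¹ a k ∧ 0 < B k z := by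
    intro a z hC
    by_contra hcon
    push_neg at hcon
    refine hC ?_
    rw [Matrix.mul_apply]
    refine Finset.sum_eq_zero fun k _ => ?_
    rcases lt_or_eq_of_le (hinv a k) with h | h
    · have hbz : B k z = 0 := le_antisymm (hcon k h) (hB k z)
      rw [hbz, mul_zero]
    · rw [← h, zero_mul]
  have hCedge' : ∀ a k z, 0 < A⁻¹ a k → 0 < B k z → (A⁻¹ * B) a z ≠ 0 := by
    intro a k z h1 h2
    have hterm : 0 < A⁻¹ a k * B k z := mul_pos h1 h2
    have hle : A⁻¹ a k * B k z ≤ (A⁻¹ * B) a z := by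
      rw [Matrix.mul_apply]
      exact Finset.single_le_sum (fun c _ => mul_nonneg (hinv a c) (hB c z))
        (Finset.mem_univ k)
    exact ne_of_gt (lt_of_lt_of_le hterm hle)
  -- the key walk translation lemma
  have key : ∀ m : ℕ, ∀ i j : n, walkOfLen D m i j → u i = 0 → 0 < u j →
      ∃ m', 1 ≤ m' ∧ m' ≤ m ∧ ∃ j', 0 < u j' ∧ walkOfLen (A⁻¹ * B) m' i j' := by
    intro m
    induction m with
    | zero =>
      intro i j hw hui huj
      rw [walkOfLen_zero hw] at hui
      linarith
    | succ m ih =>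
      intro i j hw hui huj
      obtain ⟨b, hDib, hwb⟩ := walkOfLen_uncons hw
      rcases (lt_or_eq_of_le (hunn b)) with hub | hub
      · -- 0 < u b : make a single C-edge i → b
        have hib : i ≠ b := by
          intro h
          rw [h] at hui
          linarith
        have hBib : B i b ≠ 0 := by
          intro hB0
          have hAib : A i b ≠ 0 := by
            intro hA0
            apply hDib
            simp [hD, Matrix.sub_apply, hA0, hB0]
          have := (hzero i hui).2 b (Ne.symm hib) hAib
          linarith
        refine ⟨1, le_refl 1, Nat.one_le_iff_ne_zero.mpr (by simp), b, hub, ?_⟩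
        exact walkOfLen_single (hCedge' i i b (hdiag i) (lt_of_le_of_ne (hB i b) (Ne.symm hBib)))
      · -- u b = 0
        obtain ⟨m', h1, h2, j', hj', hwc⟩ := ih b j hwb hub.symm huj
        by_cases hBib : B i b = 0
        · -- A-edge
          have hAib : A i b ≠ 0 := by
            intro hA0
            apply hDib
            simp [hD, Matrix.sub_apply, hA0, hBib]
          by_cases hib : i = b
          · exact ⟨m', h1, le_trans h2 (Nat.le_succ m), j', hj', hib ▸ hwc⟩
          · obtain ⟨m'', rfl⟩ : ∃ m'', m' = m'' + 1 :=
              ⟨m' - 1, (Nat.succ_pred_eq_of_pos h1).symm⟩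
            obtain ⟨z, hCbz, hwz⟩ := walkOfLen_uncons hwc
            obtain ⟨k, hAbk, hBkz⟩ := hCedge b z hCbz
            have hAik : 0 < A⁻¹ i k := wcdd_inv_backprop hAL0 hAWC hAib hib hAbk
            have hCiz : (A⁻¹ * B) i z ≠ 0 := hCedge' i k z hAik hBkz
            exact ⟨m'' + 1, h1, le_trans h2 (Nat.le_succ m), j', hj',
              walkOfLen_cons hCiz hwz⟩
        · -- B-edge : single C-edge i → b then continue
          have hCib : (A⁻¹ * B) i b ≠ 0 :=
            hCedge' i i b (hdiag i) (lt_of_le_of_ne (hB i b) (Ne.symm hBib))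
          exact ⟨m' + 1, le_trans h1 (Nat.le_succ m'), Nat.succ_le_succ h2, j', hj',
            walkOfLen_cons hCib hwc⟩
  -- assemble the index inequality
  unfold conHat conIdx
  refine iSup₂_le fun i hi => ?_
  have hui : u i = 0 := by
    have h1 : ¬ (∑ j, (A⁻¹ * B) i j < 1) := hi
    rw [hrow i] at h1
    push_neg at h1
    have : u i ≤ 0 := by linarith
    exact le_antisymm this (hunn i)
  have hwi : w i = 0 := (hzero i hui).1
  have hnSDD : ¬ SDDRow D i := by
    rw [sdd_iff_rowsum_pos hDL0 i]
    rw [show ∑ j, D i j = w i from rfl, hwi]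
    exact lt_irrefl 0
  refine le_trans ?_ (le_iSup₂ (f := fun (i : n) (_ : i ∈ {i : n | ¬ SDDRow D i}) =>
    sInf ((fun m : ℕ => (m : ℕ∞)) '' {m : ℕ | ∃ j, SDDRow D j ∧ walkOfLen D m i j})) i hnSDD)
  refine le_sInf fun x hx => ?_
  obtain ⟨m, ⟨j, hjS, hwDm⟩, rfl⟩ := hx
  have hwj : 0 < w j := by
    have := (sdd_iff_rowsum_pos hDL0 j).mp hjS
    exact this
  obtain ⟨m', -, hm'le, j', huj', hwc⟩ := key m i j hwDm hui (hupos j hwj)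
  have hmem : (m' : ℕ∞) ∈ (fun m : ℕ => (m : ℕ∞)) ''
      {m : ℕ | ∃ j, (∑ l, (A⁻¹ * B) j l) < 1 ∧ walkOfLen (A⁻¹ * B) m i j} := by
    refine ⟨m', ⟨j', ?_, hwc⟩, rfl⟩
    rw [hrow j']
    linarith
  exact le_trans (sInf_le hmem) (by exact_mod_cast Nat.cast_le.mpr hm'le)

end MP


section GameAux
variable {N : ℕ}

lemma Smat_mul_apply (M : Matrix (Fin (2*N+1)) (Fin (2*N+1)) ℝ) (i j : Fin (2*N+1)) :
    (Smat N * M) i j = M i.rev j := by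
  rw [Matrix.mul_apply]
  simp [Smat]

lemma mul_Smat_apply (M : Matrix (Fin (2*N+1)) (Fin (2*N+1)) ℝ) (i j : Fin (2*N+1)) :
    (M * Smat N) i j = M i j.rev := by
  rw [Matrix.mul_apply]
  have hcond : ∀ k : Fin (2*N+1), (j = k.rev) ↔ (k = j.rev) := by
    intro k
    constructor <;> intro h <;> rw [h, Fin.rev_rev]
  simp only [Smat, Matrix.of_apply]
  simp_rw [hcond]
  simp

lemma SPsiS_diag (s : GameSetup N) (φ : s.Strategy) :
    Smat N * s.Psi φ * Smat N
      = Matrix.diagonal (fun i => if i.rev ∈ φ.I then (1:ℝ) else 0) := by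
  ext i j
  rw [Matrix.mul_assoc, Smat_mul_apply, mul_Smat_apply]
  unfold GameSetup.Psi
  rcases eq_or_ne i j with rfl | hij
  · simp [Matrix.diagonal_apply_eq]
  · have : i.rev ≠ j.rev := fun h => hij (Fin.rev_inj.mp h)
    rw [Matrix.diagonal_apply_ne _ this, Matrix.diagonal_apply_ne _ hij]

lemma Amat_apply (s : GameSetup N) (φ φ' : s.Strategy) (i j : Fin (2*N+1)) :
    s.Amat φ φ' i j = (if i = j then (1:ℝ) else 0)
      - (1 - (if i ∈ φ'.I then (1:ℝ) else 0) - (if i.rev ∈ φ.I then (1:ℝ) else 0))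
          * ((if i = j then (1:ℝ) else 0) + s.L i j)
      - (if i ∈ φ'.I then (1:ℝ) else 0) * s.B φ'.δ i j := by
  unfold GameSetup.Amat
  have hdm : (1 : Matrix (Fin (2*N+1)) (Fin (2*N+1)) ℝ) - s.Psi φ' - Smat N * s.Psi φ * Smat N
      = Matrix.diagonal (fun i => 1 - (if i ∈ φ'.I then (1:ℝ) else 0)
          - (if i.rev ∈ φ.I then (1:ℝ) else 0)) := by
    rw [SPsiS_diag]
    unfold GameSetup.Psi
    rw [← Matrix.diagonal_one, ← Matrix.diagonal_sub, ← Matrix.diagonal_sub]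
  rw [hdm]
  unfold GameSetup.Psi
  simp [Matrix.sub_apply, Matrix.diagonal_mul, Matrix.add_apply, Matrix.one_apply]

lemma Bmat_apply (s : GameSetup N) (φ : s.Strategy) (i j : Fin (2*N+1)) :
    s.Bmat φ i j = (if i.rev ∈ φ.I then (1:ℝ) else 0) * s.B φ.δ i.rev j.rev := by
  unfold GameSetup.Bmat
  rw [show Smat N * s.Psi φ * s.B φ.δ * Smat N
      = (Smat N * (s.Psi φ * s.B φ.δ)) * Smat N by noncomm_ring]
  rw [mul_Smat_apply, Smat_mul_apply]
  unfold GameSetup.Psi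
  rw [Matrix.diagonal_mul]

lemma WDDRow_reflect {M E : Matrix (Fin (2*N+1)) (Fin (2*N+1)) ℝ} {i : Fin (2*N+1)}
    (h : ∀ j, E i j = M i.rev j.rev) (hw : WDDRow M i.rev) : WDDRow E i := by
  unfold WDDRow at *
  have hsum : ∑ j ∈ Finset.univ.erase i, |E i j|
      = ∑ j ∈ Finset.univ.erase i.rev, |M i.rev j| := by
    rw [Finset.sum_erase_eq_sub (Finset.mem_univ i),
      Finset.sum_erase_eq_sub (Finset.mem_univ i.rev)]
    congr 1
    · simp_rw [h]
      exact Fintype.sum_equiv Fin.revPerm _ _ (fun j => rfl)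
    · rw [h i]
  rw [hsum, h i]
  exact hw

lemma WDDRow_one {n : Type*} [Fintype n] [DecidableEq n] (i : n) :
    WDDRow (1 : Matrix n n ℝ) i := by
  unfold WDDRow
  have h1 : ∑ j ∈ Finset.univ.erase i, |(1 : Matrix n n ℝ) i j| = 0 :=
    Finset.sum_eq_zero fun j hj => by
      rw [Matrix.one_apply_ne (Ne.symm (Finset.ne_of_mem_erase hj)), abs_zero]
  rw [h1]
  simp

lemma SDDRow_one {n : Type*} [Fintype n] [DecidableEq n] (i : n) :
    SDDRow (1 : Matrix n n ℝ) i := by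
  unfold SDDRow
  have h1 : ∑ j ∈ Finset.univ.erase i, |(1 : Matrix n n ℝ) i j| = 0 :=
    Finset.sum_eq_zero fun j hj => by
      rw [Matrix.one_apply_ne (Ne.symm (Finset.ne_of_mem_erase hj)), abs_zero]
  rw [h1]
  simp

lemma WDDRow_congr {n : Type*} [Fintype n] [DecidableEq n]
    {M M' : Matrix n n ℝ} {i : n} (h : ∀ j, M i j = M' i j) :
    WDDRow M i ↔ WDDRow M' i := by
  unfold WDDRow
  simp_rw [h]

lemma SDDRow_congr {n : Type*} [Fintype n] [DecidableEq n]
    {M M' : Matrix n n ℝ} {i : n} (h : ∀ j, M i j = M' i j) :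
    SDDRow M i ↔ SDDRow M' i := by
  unfold SDDRow
  simp_rw [h]

end GameAux


/-- Under (A0)–(A2), for all strategies `φ, φ̄ ∈ Φ`:
`𝔸(φ,φ̄)⁻¹ 𝔹(φ)` is substochastic, `(𝔸 − 𝔹)(φ,φ̄)` is a WDD L0-matrix, and
`ĉon[𝔸⁻¹𝔹(φ,φ̄)] ≤ con[(𝔸 − 𝔹)(φ,φ̄)]`. -/
theorem statement6 (hN : 1 ≤ N) (s : GameSetup N)
    (hA0 : s.A0) (hA1 : s.A1) (hA2 : s.A2) :
    ∀ φ φ' : s.Strategy,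
      IsSubstochastic ((s.Amat φ φ')⁻¹ * s.Bmat φ) ∧
      (IsWDD (s.Amat φ φ' - s.Bmat φ) ∧ IsL0Matrix (s.Amat φ φ' - s.Bmat φ)) ∧
      conHat ((s.Amat φ φ')⁻¹ * s.Bmat φ) ≤ conIdx (s.Amat φ φ' - s.Bmat φ) := by
  intro φ φ'
  obtain ⟨⟨hLS, hLL0⟩, hBall⟩ := hA1
  obtain ⟨hW', hL0'⟩ := hBall φ'.δ φ'.hδ
  obtain ⟨hW0, hL00⟩ := hBall φ.δ φ.hδ
  have hdisj : ∀ i : Fin (2*N+1), i ∈ φ'.I → i.rev ∉ φ.I := by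
    intro i h1 h2
    have hx1 := φ'.hI i h1
    have hx2 := φ.hI i.rev h2
    rw [s.hx_sym i] at hx2
    linarith
  have hBnn : ∀ (ψ : s.Strategy), ∀ k l, 0 ≤ s.B ψ.δ k l := by
    intro ψ k l
    rcases eq_or_ne k l with rfl | hkl
    · exact hA2 ψ.δ ψ.hδ k
    · have h := (hBall ψ.δ ψ.hδ).2.1 k l hkl
      rw [Matrix.sub_apply, Matrix.one_apply_ne hkl] at h
      linarith
  -- row formulas
  have rowA1 : ∀ i ∈ φ'.I, ∀ j, s.Amat φ φ' i j = (1 - s.B φ'.δ) i j := by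
    intro i hi j
    rw [Amat_apply, Matrix.sub_apply, Matrix.one_apply]
    rw [if_pos hi, if_neg (hdisj i hi)]
    ring
  have rowA2 : ∀ i : Fin (2*N+1), i.rev ∈ φ.I → ∀ j,
      s.Amat φ φ' i j = (1 : Matrix (Fin (2*N+1)) (Fin (2*N+1)) ℝ) i j := by
    intro i hi j
    have hi' : i ∉ φ'.I := fun h => hdisj i h hi
    rw [Amat_apply, Matrix.one_apply, if_neg hi', if_pos hi]
    ring
  have rowA3 : ∀ i : Fin (2*N+1), i ∉ φ'.I → i.rev ∉ φ.I → ∀ j,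
      s.Amat φ φ' i j = (- s.L) i j := by
    intro i h1 h2 j
    rw [Amat_apply, Matrix.neg_apply, if_neg h1, if_neg h2]
    ring
  have rowB0 : ∀ i : Fin (2*N+1), i.rev ∉ φ.I → ∀ j, s.Bmat φ i j = 0 := by
    intro i hi j
    rw [Bmat_apply, if_neg hi, zero_mul]
  have rowB1 : ∀ i : Fin (2*N+1), i.rev ∈ φ.I → ∀ j,
      s.Bmat φ i j = s.B φ.δ i.rev j.rev := by
    intro i hi j
    rw [Bmat_apply, if_pos hi, one_mul]
  have rowD1 : ∀ i ∈ φ'.I, ∀ j, (s.Amat φ φ' - s.Bmat φ) i j = (1 - s.B φ'.δ) i j := by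
    intro i hi j
    rw [Matrix.sub_apply, rowA1 i hi j, rowB0 i (hdisj i hi) j, sub_zero]
  have rowD2 : ∀ i : Fin (2*N+1), i.rev ∈ φ.I → ∀ j,
      (s.Amat φ φ' - s.Bmat φ) i j = (1 - s.B φ.δ) i.rev j.rev := by
    intro i hi j
    rw [Matrix.sub_apply, rowA2 i hi j, rowB1 i hi j, Matrix.sub_apply]
    congr 1
    rw [Matrix.one_apply, Matrix.one_apply]
    by_cases h : i = j
    · rw [if_pos h, if_pos (by rw [h])]
    · rw [if_neg h, if_neg (fun hc => h (Fin.rev_inj.mp hc))]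
  have rowD3 : ∀ i : Fin (2*N+1), i ∉ φ'.I → i.rev ∉ φ.I → ∀ j,
      (s.Amat φ φ' - s.Bmat φ) i j = (- s.L) i j := by
    intro i h1 h2 j
    rw [Matrix.sub_apply, rowA3 i h1 h2 j, rowB0 i h2 j, sub_zero]
  -- structural facts
  have hDL0 : IsL0Matrix (s.Amat φ φ' - s.Bmat φ) := by
    constructor
    · intro i j hij
      by_cases h1 : i ∈ φ'.I
      · rw [rowD1 i h1 j]; exact hL0'.1 i j hij
      by_cases h2 : i.rev ∈ φ.I
      · rw [rowD2 i h2 j]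
        exact hL00.1 i.rev j.rev (fun h => hij (Fin.rev_inj.mp h))
      · rw [rowD3 i h1 h2 j]; exact hLL0.1 i j hij
    · intro i
      by_cases h1 : i ∈ φ'.I
      · rw [rowD1 i h1 i]; exact hL0'.2 i
      by_cases h2 : i.rev ∈ φ.I
      · rw [rowD2 i h2 i]; exact hL00.2 i.rev
      · rw [rowD3 i h1 h2 i]; exact hLL0.2 i
  have hDW : IsWDD (s.Amat φ φ' - s.Bmat φ) := by
    intro i
    by_cases h1 : i ∈ φ'.I
    · rw [WDDRow_congr (rowD1 i h1)]; exact hW' i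
    by_cases h2 : i.rev ∈ φ.I
    · exact WDDRow_reflect (rowD2 i h2) (hW0 i.rev)
    · rw [WDDRow_congr (rowD3 i h1 h2)]
      exact le_of_lt (hLS i)
  have hBmnn : ∀ i j, 0 ≤ s.Bmat φ i j := by
    intro i j
    rw [Bmat_apply]
    by_cases h : i.rev ∈ φ.I
    · rw [if_pos h, one_mul]; exact hBnn φ i.rev j.rev
    · rw [if_neg h, zero_mul]
  have hAL0 : IsL0Matrix (s.Amat φ φ') := by
    constructor
    · intro i j hij
      by_cases h1 : i ∈ φ'.I
      · rw [rowA1 i h1 j]; exact hL0'.1 i j hij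
      by_cases h2 : i.rev ∈ φ.I
      · rw [rowA2 i h2 j, Matrix.one_apply_ne hij]
      · rw [rowA3 i h1 h2 j]; exact hLL0.1 i j hij
    · intro i
      by_cases h1 : i ∈ φ'.I
      · rw [rowA1 i h1 i]; exact hL0'.2 i
      by_cases h2 : i.rev ∈ φ.I
      · rw [rowA2 i h2 i, Matrix.one_apply_eq]; norm_num
      · rw [rowA3 i h1 h2 i]; exact hLL0.2 i
  have hSDDout : ∀ c : Fin (2*N+1), c ∉ φ'.I → SDDRow (s.Amat φ φ') c := by
    intro c hc
    by_cases h2 : c.rev ∈ φ.I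
    · rw [SDDRow_congr (rowA2 c h2)]; exact SDDRow_one c
    · rw [SDDRow_congr (rowA3 c hc h2)]; exact hLS c
  have hAW : IsWDD (s.Amat φ φ') := by
    intro i
    by_cases h1 : i ∈ φ'.I
    · rw [WDDRow_congr (rowA1 i h1)]; exact hW' i
    · exact le_of_lt (hSDDout i h1)
  have hedgeA : ∀ a ∈ φ'.I, ∀ c, a ≠ c → s.B φ'.δ a c ≠ 0 → s.Amat φ φ' a c ≠ 0 := by
    intro a ha c hne hB
    rw [rowA1 a ha c, Matrix.sub_apply, Matrix.one_apply_ne hne]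
    simpa using hB
  have hAWC : IsWCDD (s.Amat φ φ') := by
    refine ⟨hAW, fun i hi => ?_⟩
    have hiI : i ∈ φ'.I := by
      by_contra h
      exact hi (hSDDout i h)
    obtain ⟨j, hjn, hwalk⟩ := hA0 φ' i hiI
    have transl : ∀ a, MWalk (s.B φ'.δ) a j → a ∈ φ'.I →
        ∃ j', SDDRow (s.Amat φ φ') j' ∧ MWalk (s.Amat φ φ') a j' := by
      intro a hw
      induction hw using Relation.TransGen.head_induction_on with
      | single h =>
        intro ha
        rename_i a'
        have hne : a' ≠ j := fun hc => hjn (hc ▸ ha)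
        exact ⟨j, hSDDout j hjn, Relation.TransGen.single (hedgeA a' ha j hne h)⟩
      | head h hw ih =>
        intro ha
        rename_i a' c
        by_cases hc : c ∈ φ'.I
        · obtain ⟨j', hS, hw'⟩ := ih hc
          rcases eq_or_ne a' c with rfl | hne
          · exact ⟨j', hS, hw'⟩
          · exact ⟨j', hS, Relation.TransGen.head (hedgeA a' ha c hne h) hw'⟩
        · have hne : a' ≠ c := fun hac => hc (hac ▸ ha)
          exact ⟨c, hSDDout c hc, Relation.TransGen.single (hedgeA a' ha c hne h)⟩
    exact transl i hwalk hiI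
  obtain ⟨hsub, hcon⟩ := generic_main hAL0 hAWC hBmnn hDW hDL0
  exact ⟨hsub, ⟨hDW, hDL0⟩, hcon⟩

end
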